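/- Let f be a monic real polynomial of degree n ≥ 1 satisfying Assumption 1, with even/odd splitting f = p − q. Let x₀ > 0 be such that p(x₀) > q(x₀) and f has no real root in the interval [x₀, +∞). Then the sequence defined by x_{t+1} = x_t · p(x_t)/q(x_t) is strictly increasing and tends to +∞. -/

import Mathlib

open Filter Polynomial Topology

/-- Let `f` be a monic real polynomial of degree `n ≥ 1` satisfying
Assumption 1, with even/odd splitting `f = p - q`. Let `x₀ > 0` with `p x₀ > q x₀` and
such that `f` has no real root in `[x₀, +∞)`. Then the sequence defined by
`x (t+1) = x t * p (x t) / q (x t)` is strictly increasing and tends to `+∞`. -/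

lemma mul_coeff_nonneg {p q : Polynomial ℝ} (hp : ∀ i, 0 ≤ p.coeff i)
    (hq : ∀ i, 0 ≤ q.coeff i) : ∀ i, 0 ≤ (p * q).coeff i := by
  intro i
  rw [Polynomial.coeff_mul]
  exact Finset.sum_nonneg fun x _ => mul_nonneg (hp x.1) (hq x.2)

lemma coeff_comp_neg_X (p : Polynomial ℝ) (j : ℕ) :
    (p.comp (-X)).coeff j = (-1) ^ j * p.coeff j := by
  induction p using Polynomial.induction_on' with
  | add f g hf hg => simp [add_comp, coeff_add, hf, hg, mul_add]
  | monomial i a =>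
    rw [monomial_comp]
    have h1 : (-X : Polynomial ℝ) ^ i = C ((-1) ^ i) * X ^ i := by
      rw [neg_pow, C_pow, C_neg, C_1]
    rw [h1, ← mul_assoc, coeff_mul_X_pow', coeff_C_mul, coeff_monomial, coeff_C]
    by_cases h : i = j
    · subst h; simp [mul_comm]
    · rcases lt_or_ge j i with hlt | hge
      · simp [Nat.not_le.mpr hlt, h]
      · have h2 : j - i ≠ 0 := by omega
        simp [hge, h2, h]

lemma coeffs_nonneg_of_roots_re_nonpos :
    ∀ N : ℕ, ∀ h : Polynomial ℝ, h.natDegree ≤ N → 0 < h.leadingCoeff →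
      (∀ z : ℂ, Polynomial.aeval z h = 0 → z.re ≤ 0) → ∀ j, 0 ≤ h.coeff j := by
  intro N
  induction N with
  | zero =>
    intro h hd hl _ j
    have hd0 : h.natDegree = 0 := le_antisymm hd (Nat.zero_le _)
    rcases Nat.eq_zero_or_pos j with rfl | hj
    · have : h.coeff 0 = h.leadingCoeff := by rw [leadingCoeff, hd0]
      rw [this]; exact le_of_lt hl
    · rw [coeff_eq_zero_of_natDegree_lt (by omega)]
  | succ N IH =>
    intro h hd hl hr j
    by_cases hle : h.natDegree ≤ N
    · exact IH h hle hl hr j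
    have hne : h ≠ 0 := fun h0 => by simp [h0] at hl
    have hdeg : h.natDegree = N + 1 := by omega
    have hdegpos : 0 < (h.map (algebraMap ℝ ℂ)).degree := by
      rw [degree_map_eq_of_injective (algebraMap ℝ ℂ).injective]
      exact natDegree_pos_iff_degree_pos.mp (by omega)
    obtain ⟨w, hw⟩ := Complex.exists_root hdegpos
    have hw0 : Polynomial.aeval w h = 0 := by
      rwa [aeval_def, ← eval_map]
    have hwre : w.re ≤ 0 := hr w hw0
    by_cases him : w.im = 0
    · -- real root
      have hwr : w = ((w.re : ℝ) : ℂ) := by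
        apply Complex.ext <;> simp [him]
      have hroot : h.IsRoot w.re := by
        have := hw0
        rw [hwr, show ((w.re : ℝ) : ℂ) = algebraMap ℝ ℂ w.re from rfl, aeval_def,
          eval₂_at_apply] at this
        exact (map_eq_zero_iff _ (algebraMap ℝ ℂ).injective).mp this
      obtain ⟨k, hk⟩ := dvd_iff_isRoot.mpr hroot
      have hk0 : k ≠ 0 := by rintro rfl; rw [mul_zero] at hk; exact hne hk
      have hlk : 0 < k.leadingCoeff := by
        rwa [hk, leadingCoeff_mul, leadingCoeff_X_sub_C, one_mul] at hl
      have hdk : k.natDegree ≤ N := by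
        have := hdeg
        rw [hk, natDegree_mul (X_sub_C_ne_zero _) hk0, natDegree_X_sub_C] at this
        omega
      have hrk : ∀ z : ℂ, Polynomial.aeval z k = 0 → z.re ≤ 0 := by
        intro z hz
        apply hr z
        rw [hk, map_mul, hz, mul_zero]
      have hlin : ∀ i, 0 ≤ (X - C w.re).coeff i := by
        intro i
        match i with
        | 0 => simp [coeff_sub]; linarith
        | 1 => simp [coeff_sub]
        | (m+2) => simp [coeff_sub, coeff_C, coeff_X]
      rw [hk]
      exact mul_coeff_nonneg hlin (IH k hdk hlk hrk) j
    · -- complex root, use quadratic factor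
      set b : ℝ := -(2 * w.re) with hb
      set c : ℝ := Complex.normSq w with hc
      set Q : Polynomial ℝ := X ^ 2 + C b * X + C c with hQdef
      have hQmap : Q.map (algebraMap ℝ ℂ) =
          (X - C w) * (X - C ((starRingEnd ℂ) w)) := by
        have e1 : ((b : ℝ) : ℂ) = -(w + (starRingEnd ℂ) w) := by
          rw [Complex.add_conj]; push_cast [hb]; ring
        have e2 : ((c : ℝ) : ℂ) = w * (starRingEnd ℂ) w := by
          rw [Complex.mul_conj]
        simp only [hQdef, Polynomial.map_add, Polynomial.map_mul, Polynomial.map_pow,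
          Polynomial.map_X, Polynomial.map_C, Complex.coe_algebraMap, e1, e2]
        rw [map_neg, map_add, map_mul]
        ring
      have hQmonic : Q.Monic := by
        rw [hQdef, add_assoc]
        apply monic_X_pow_add
        exact lt_of_le_of_lt degree_linear_le (by norm_num)
      -- conj w is also a root
      have hcw0 : Polynomial.aeval ((starRingEnd ℂ) w) h = 0 := by
        rw [Polynomial.aeval_conj, hw0, map_zero]
      have hdvd : Q ∣ h := by
        rw [← map_dvd_map (algebraMap ℝ ℂ) (algebraMap ℝ ℂ).injective hQmonic, hQmap]
        obtain ⟨k', hk'⟩ := dvd_iff_isRoot.mpr (show (h.map (algebraMap ℝ ℂ)).IsRoot w from hw)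
        have hck' : k'.IsRoot ((starRingEnd ℂ) w) := by
          have h0 : ((starRingEnd ℂ) w - w) * k'.eval ((starRingEnd ℂ) w) = 0 := by
            have := hcw0
            rw [aeval_def, ← eval_map, hk'] at this
            simpa [eval_mul] using this
          have hne' : (starRingEnd ℂ) w - w ≠ 0 := by
            intro hcon
            apply him
            have : ((starRingEnd ℂ) w).im = w.im := by
              rw [sub_eq_zero] at hcon; rw [hcon]
            simp [Complex.conj_im] at this
            linarith
          exact (mul_eq_zero.mp h0).resolve_left hne'
        obtain ⟨k'', hk''⟩ := dvd_iff_isRoot.mpr hck'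
        exact ⟨k'', by rw [hk', hk'', mul_assoc]⟩
      obtain ⟨k, hk⟩ := hdvd
      have hk0 : k ≠ 0 := by rintro rfl; rw [mul_zero] at hk; exact hne hk
      have hQne : Q ≠ 0 := hQmonic.ne_zero
      have hQdeg : Q.natDegree = 2 := by
        rw [hQdef, show (X ^ 2 + C b * X + C c : Polynomial ℝ) = C 1 * X ^ 2 + C b * X + C c by
          rw [C_1, one_mul]]
        exact natDegree_quadratic one_ne_zero
      have hlk : 0 < k.leadingCoeff := by
        rwa [hk, leadingCoeff_mul, hQmonic.leadingCoeff, one_mul] at hl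
      have hdk : k.natDegree ≤ N := by
        have := hdeg
        rw [hk, natDegree_mul hQne hk0, hQdeg] at this
        omega
      have hrk : ∀ z : ℂ, Polynomial.aeval z k = 0 → z.re ≤ 0 := by
        intro z hz
        apply hr z
        rw [hk, map_mul, hz, mul_zero]
      have hQnn : ∀ i, 0 ≤ Q.coeff i := by
        intro i
        have hbpos : 0 ≤ b := by rw [hb]; linarith
        have hcpos : 0 ≤ c := Complex.normSq_nonneg w
        match i with
        | 0 => simpa [hQdef, coeff_add, coeff_C, coeff_X, coeff_X_pow] using hcpos
        | 1 => simpa [hQdef, coeff_add, coeff_C, coeff_X, coeff_X_pow] using hbpos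
        | 2 => simp [hQdef, coeff_add, coeff_C, coeff_X, coeff_X_pow]
        | (m+3) => simp [hQdef, coeff_add, coeff_C, coeff_X, coeff_X_pow, Nat.succ_ne_zero]
      rw [hk]
      exact mul_coeff_nonneg hQnn (IH k hdk hlk hrk) j

lemma sign_coeff (f : Polynomial ℝ) (n : ℕ) (hmonic : f.Monic) (hdeg : f.natDegree = n)
    (has1 : ∀ z : ℂ, Polynomial.aeval z f = 0 → 0 ≤ z.re) :
    ∀ j, 0 ≤ (-1 : ℝ) ^ (n + j) * f.coeff j := by
  set g : Polynomial ℝ := C ((-1) ^ n) * (f.comp (-X)) with hgdef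
  have hgcoeff : ∀ j, g.coeff j = (-1) ^ (n + j) * f.coeff j := by
    intro j
    rw [hgdef, coeff_C_mul, coeff_comp_neg_X, pow_add, mul_assoc]
  have hfn : f.coeff n = 1 := by rw [← hdeg]; exact hmonic.coeff_natDegree
  have hgn : g.coeff n = 1 := by
    rw [hgcoeff, hfn, mul_one, (Even.add_self n).neg_one_pow]
  have hgd : g.natDegree ≤ n := by
    apply le_trans (natDegree_mul_le)
    simp only [natDegree_C, zero_add]
    rw [natDegree_comp]
    simp [hdeg]
  have hgdeg : g.natDegree = n :=
    le_antisymm hgd (le_natDegree_of_ne_zero (by rw [hgn]; norm_num))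
  have hgl : 0 < g.leadingCoeff := by
    rw [leadingCoeff, hgdeg, hgn]; norm_num
  have hgr : ∀ z : ℂ, Polynomial.aeval z g = 0 → z.re ≤ 0 := by
    intro z hz
    rw [hgdef, map_mul, aeval_C, aeval_comp, map_neg, aeval_X] at hz
    have h1 : (Polynomial.aeval (-z)) f = 0 := by
      rcases mul_eq_zero.mp hz with h | h
      · exfalso; revert h; simp
      · exact h
    have := has1 _ h1
    rw [Complex.neg_re] at this
    linarith
  intro j
  rw [← hgcoeff]
  exact coeffs_nonneg_of_roots_re_nonpos g.natDegree g le_rfl hgl hgr j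

lemma coeff_pred_neg (f : Polynomial ℝ) (n : ℕ) (hn : 1 ≤ n)
    (hmonic : f.Monic) (hdeg : f.natDegree = n)
    (has1 : ∀ z : ℂ, Polynomial.aeval z f = 0 → 0 ≤ z.re)
    (has2 : ∃ z : ℂ, Polynomial.aeval z f = 0 ∧ 0 < z.re) :
    0 < -(f.coeff (n - 1)) := by
  set F : Polynomial ℂ := f.map (algebraMap ℝ ℂ) with hF
  have hFm : F.Monic := hmonic.map _
  have hFdeg : F.natDegree = n := by rw [hF, hmonic.natDegree_map, hdeg]
  have hFne : F ≠ 0 := hFm.ne_zero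
  have hsum : F.nextCoeff = -F.roots.sum :=
    (IsAlgClosed.splits F).nextCoeff_eq_neg_sum_roots_of_monic hFm
  have hnext : F.nextCoeff = ((f.coeff (n - 1) : ℝ) : ℂ) := by
    rw [nextCoeff_of_natDegree_pos (by omega), hFdeg, hF, coeff_map]
    rfl
  obtain ⟨z, hz, hzre⟩ := has2
  have hzmem : z ∈ F.roots := by
    rw [mem_roots hFne]
    rwa [IsRoot, eval_map, ← aeval_def]
  obtain ⟨s, hs⟩ := Multiset.exists_cons_of_mem hzmem
  have hsre : 0 ≤ (s.sum).re := by
    have : (s.sum).re = (s.map Complex.re).sum := by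
      exact map_multiset_sum Complex.reAddGroupHom s
    rw [this]
    apply Multiset.sum_nonneg
    intro a ha
    obtain ⟨z', hz', rfl⟩ := Multiset.mem_map.mp ha
    have hz'mem : z' ∈ F.roots := by rw [hs]; exact Multiset.mem_cons_of_mem hz'
    have := (mem_roots hFne).mp hz'mem
    rw [IsRoot, eval_map, ← aeval_def] at this
    exact has1 z' this
  have hroots : 0 < (F.roots.sum).re := by
    rw [hs, Multiset.sum_cons, Complex.add_re]
    linarith
  have : ((f.coeff (n - 1) : ℝ) : ℂ).re = (-F.roots.sum).re := by rw [← hnext, hsum]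
  rw [Complex.ofReal_re, Complex.neg_re] at this
  linarith

theorem stmt10 (f : Polynomial ℝ) (n : ℕ) (hn : 1 ≤ n)
    (hmonic : f.Monic) (hdeg : f.natDegree = n)
    (has1 : ∀ z : ℂ, (Polynomial.aeval z) f = 0 → 0 ≤ z.re)
    (has2 : ∃ z : ℂ, (Polynomial.aeval z) f = 0 ∧ 0 < z.re)
    (p q : ℝ → ℝ)
    (hp : ∀ x : ℝ, p x =
      ∑ j ∈ Finset.range (n + 1), if (n + j) % 2 = 0 then f.coeff j * x ^ j else 0)
    (hq : ∀ x : ℝ, q x =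
      ∑ j ∈ Finset.range (n + 1), if (n + j) % 2 = 1 then -(f.coeff j) * x ^ j else 0)
    (x₀ : ℝ) (hx₀ : 0 < x₀) (hpq : q x₀ < p x₀)
    (hnoroot : ∀ t : ℝ, x₀ ≤ t → ¬ f.IsRoot t)
    (x : ℕ → ℝ) (hx0 : x 0 = x₀)
    (hxrec : ∀ t : ℕ, x (t + 1) = x t * p (x t) / q (x t)) :
    StrictMono x ∧ Tendsto x atTop atTop := by
  have hA := sign_coeff f n hmonic hdeg has1
  have hOdd : ∀ j, (n + j) % 2 = 1 → 0 ≤ -(f.coeff j) := by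
    intro j hj
    have h1 := hA j
    rw [(Nat.odd_iff.mpr hj).neg_one_pow] at h1
    linarith
  have hB := coeff_pred_neg f n hn hmonic hdeg has1 has2
  have hfn : f.coeff n = 1 := by rw [← hdeg]; exact hmonic.coeff_natDegree
  -- positivity of q and p on positive reals
  have hqpos : ∀ y : ℝ, 0 < y → 0 < q y := by
    intro y hy
    rw [hq]
    apply Finset.sum_pos'
    · intro j _
      by_cases hc : (n + j) % 2 = 1
      · rw [if_pos hc]; exact mul_nonneg (hOdd j hc) (le_of_lt (pow_pos hy j))
      · rw [if_neg hc]
    · refine ⟨n - 1, Finset.mem_range.mpr (by omega), ?_⟩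
      have hc : (n + (n - 1)) % 2 = 1 := by omega
      rw [if_pos hc]
      exact mul_pos hB (pow_pos hy _)
  -- eval f = p - q
  have hpq_eval : ∀ y : ℝ, f.eval y = p y - q y := by
    intro y
    rw [hp, hq, ← Finset.sum_sub_distrib]
    conv_lhs => rw [Polynomial.eval_eq_sum_range, hdeg]
    apply Finset.sum_congr rfl
    intro j _
    by_cases hc : (n + j) % 2 = 0
    · rw [if_pos hc, if_neg (by omega), sub_zero]
    · rw [if_neg hc, if_pos (by omega)]; ring
  have hfx0 : 0 < f.eval x₀ := by rw [hpq_eval]; linarith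
  have hfpos : ∀ t : ℝ, x₀ ≤ t → 0 < f.eval t := by
    intro t ht
    rcases lt_trichotomy (f.eval t) 0 with hlt | heq | hgt
    · exfalso
      have hsub := intermediate_value_Icc' ht
        (Continuous.continuousOn (Polynomial.continuous f))
        (Set.mem_Icc.mpr ⟨le_of_lt hlt, le_of_lt hfx0⟩)
      obtain ⟨c, hc, hc0⟩ := hsub
      exact hnoroot c hc.1 hc0
    · exact absurd heq (hnoroot t ht)
    · exact hgt
  have hstep : ∀ t : ℕ, x₀ ≤ x t → x t < x (t + 1) := by
    intro t ht
    have hxt : 0 < x t := lt_of_lt_of_le hx₀ ht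
    have hq' := hqpos (x t) hxt
    have hf' := hfpos (x t) ht
    rw [hpq_eval] at hf'
    rw [hxrec, lt_div_iff₀ hq']
    exact mul_lt_mul_of_pos_left (by linarith) hxt
  have hkey : ∀ t : ℕ, x₀ ≤ x t := by
    intro t
    induction t with
    | zero => rw [hx0]
    | succ t ih => exact le_trans ih (le_of_lt (hstep t ih))
  have hmono : StrictMono x := strictMono_nat_of_lt_succ fun t => hstep t (hkey t)
  refine ⟨hmono, ?_⟩
  rcases tendsto_of_monotone hmono.monotone with h | ⟨l, hl⟩
  · exact h
  exfalso
  have hlx0 : x₀ ≤ l := ge_of_tendsto hl (Eventually.of_forall hkey)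
  have hlpos : 0 < l := lt_of_lt_of_le hx₀ hlx0
  have hql : 0 < q l := hqpos l hlpos
  set P : ℝ → ℝ := fun y =>
    ∑ j ∈ Finset.range (n + 1), if (n + j) % 2 = 0 then f.coeff j * y ^ j else 0 with hP
  set Qf : ℝ → ℝ := fun y =>
    ∑ j ∈ Finset.range (n + 1), if (n + j) % 2 = 1 then -(f.coeff j) * y ^ j else 0 with hQf
  have hpP : ∀ y, p y = P y := fun y => hp y
  have hqQ : ∀ y, q y = Qf y := fun y => hq y
  have hPc : Continuous P := by
    apply continuous_finset_sum
    intro j _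
    by_cases hc : (n + j) % 2 = 0
    · simp only [if_pos hc]; exact continuous_const.mul (continuous_pow j)
    · simp only [if_neg hc]; exact continuous_const
  have hQc : Continuous Qf := by
    apply continuous_finset_sum
    intro j _
    by_cases hc : (n + j) % 2 = 1
    · simp only [if_pos hc]; exact continuous_const.mul (continuous_pow j)
    · simp only [if_neg hc]; exact continuous_const
  have hPl : Tendsto (fun t => p (x t)) atTop (𝓝 (p l)) := by
    have h1 : Tendsto (fun t => P (x t)) atTop (𝓝 (P l)) := (hPc.tendsto l).comp hl
    simpa only [hpP] using h1
  have hQl : Tendsto (fun t => q (x t)) atTop (𝓝 (q l)) := by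
    have h1 : Tendsto (fun t => Qf (x t)) atTop (𝓝 (Qf l)) := (hQc.tendsto l).comp hl
    simpa only [hqQ] using h1
  have hxl1 : Tendsto (fun t => x (t + 1)) atTop (𝓝 l) :=
    hl.comp (tendsto_add_atTop_nat 1)
  have hrhs : Tendsto (fun t => x t * p (x t) / q (x t)) atTop (𝓝 (l * p l / q l)) :=
    (hl.mul hPl).div hQl (ne_of_gt hql)
  have heqf : (fun t => x (t + 1)) = fun t => x t * p (x t) / q (x t) := funext hxrec
  rw [heqf] at hxl1
  have hlim : l = l * p l / q l := tendsto_nhds_unique hxl1 hrhs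
  have h2 : l * p l = l * q l := by
    rw [eq_comm, div_eq_iff (ne_of_gt hql)] at hlim
    linarith [hlim]
  have hpl : p l = q l := mul_left_cancel₀ (ne_of_gt hlpos) h2
  have hfl : f.eval l = 0 := by rw [hpq_eval]; linarith
  exact hnoroot l hlx0 hfl
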